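/- Let G be a graph and let T and T' be two vertex-disjoint triangles in G. Then either there exist orderings x₁, x₂, x₃ of the vertices of T and y₁, y₂, y₃ of the vertices of T' such that x₃, x₁, x₂, y₁, y₂, y₃ is a square path in G, or there exist vertices x₁, x₂ ∈ T and y₁, y₂ ∈ T' with x₁ ≠ x₂ and y₁ ≠ y₂ such that x₁ is not adjacent to y₁ and x₂ is not adjacent to y₂. -/

import Mathlib

/-- `l` is a square path in `G`: distinct vertices with `vᵢ ~ vⱼ` whenever
`1 ≤ |i - j| ≤ 2`. -/
def IsSquarePath {V : Type*} (G : SimpleGraph V) (l : List V) : Prop :=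
  l.Nodup ∧ ∀ i j : Fin l.length,
    (i.val + 1 = j.val ∨ i.val + 2 = j.val) → G.Adj (l.get i) (l.get j)

lemma sq6 {V : Type*} (G : SimpleGraph V) (a b c d e f : V)
    (nodup : ([a, b, c, d, e, f] : List V).Nodup)
    (h01 : G.Adj a b) (h02 : G.Adj a c) (h12 : G.Adj b c) (h13 : G.Adj b d)
    (h23 : G.Adj c d) (h24 : G.Adj c e) (h34 : G.Adj d e) (h35 : G.Adj d f)
    (h45 : G.Adj e f) :
    IsSquarePath G [a, b, c, d, e, f] := by
  refine ⟨nodup, ?_⟩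
  intro i j hij
  fin_cases i <;> fin_cases j <;> simp_all <;> first | exact h13 | exact h23 | exact h24 | exact h34 | exact h35 | exact h45

lemma two_of_erase {V : Type*} [DecidableEq V] (T : Finset V) (x : V)
    (hx : x ∈ T) (h3 : T.card = 3) :
    ∃ p q, p ≠ q ∧ p ∈ T ∧ q ∈ T ∧ x ≠ p ∧ x ≠ q ∧ T = {x, p, q} := by
  have h2 : (T.erase x).card = 2 := by
    rw [Finset.card_erase_of_mem hx, h3]
  obtain ⟨p, q, hpq, hE⟩ := Finset.card_eq_two.mp h2
  have hpE : p ∈ T.erase x := by rw [hE]; simp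
  have hqE : q ∈ T.erase x := by rw [hE]; simp
  refine ⟨p, q, hpq, Finset.mem_of_mem_erase hpE, Finset.mem_of_mem_erase hqE,
    (Finset.ne_of_mem_erase hpE).symm, (Finset.ne_of_mem_erase hqE).symm, ?_⟩
  have := Finset.insert_erase hx
  rw [hE] at this
  exact this.symm

theorem stmt10 (V : Type) [DecidableEq V] (G : SimpleGraph V) (T T' : Finset V)
    (hT3 : T.card = 3) (hT'3 : T'.card = 3)
    (hT : ∀ u ∈ T, ∀ v ∈ T, u ≠ v → G.Adj u v)
    (hT' : ∀ u ∈ T', ∀ v ∈ T', u ≠ v → G.Adj u v)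
    (hdisj : Disjoint T T') :
    (∃ x₁ x₂ x₃ y₁ y₂ y₃ : V, ({x₁, x₂, x₃} : Finset V) = T ∧
      ({y₁, y₂, y₃} : Finset V) = T' ∧
      IsSquarePath G [x₃, x₁, x₂, y₁, y₂, y₃]) ∨
    (∃ x₁ x₂ y₁ y₂ : V, x₁ ∈ T ∧ x₂ ∈ T ∧ y₁ ∈ T' ∧ y₂ ∈ T' ∧ x₁ ≠ x₂ ∧ y₁ ≠ y₂ ∧
      ¬ G.Adj x₁ y₁ ∧ ¬ G.Adj x₂ y₂) := by
  have hcross : ∀ u ∈ T, ∀ v ∈ T', u ≠ v := by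
    intro u hu v hv huv
    exact Finset.disjoint_left.mp hdisj hu (huv ▸ hv)
  by_cases hall : ∀ x ∈ T, ∀ y ∈ T', G.Adj x y
  · -- complete bipartite: any ordering works
    obtain ⟨a, b, c, hab, hac, hbc, hTe⟩ := Finset.card_eq_three.mp hT3
    obtain ⟨d, e, f, hde, hdf, hef, hT'e⟩ := Finset.card_eq_three.mp hT'3
    have ha : a ∈ T := by rw [hTe]; simp
    have hb : b ∈ T := by rw [hTe]; simp
    have hc : c ∈ T := by rw [hTe]; simp
    have hd : d ∈ T' := by rw [hT'e]; simp
    have he : e ∈ T' := by rw [hT'e]; simp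
    have hf : f ∈ T' := by rw [hT'e]; simp
    left
    refine ⟨b, c, a, d, e, f, ?_, hT'e.symm, ?_⟩
    · rw [hTe]; ext z; simp; tauto
    · refine sq6 G a b c d e f ?_ (hT a ha b hb hab) (hT a ha c hc hac)
        (hT b hb c hc hbc) (hall b hb d hd) (hall c hc d hd) (hall c hc e he)
        (hT' d hd e he hde) (hT' d hd f hf hdf) (hT' e he f hf hef)
      simp only [List.nodup_cons, List.mem_cons, List.not_mem_nil, or_false,
        List.nodup_nil, and_true, List.mem_singleton]
      push_neg
      exact ⟨⟨hab, hac, hcross a ha d hd, hcross a ha e he, hcross a ha f hf⟩,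
        ⟨hbc, hcross b hb d hd, hcross b hb e he, hcross b hb f hf⟩,
        ⟨hcross c hc d hd, hcross c hc e he, hcross c hc f hf⟩, ⟨hde, hdf⟩, hef, trivial⟩
  · push_neg at hall
    obtain ⟨x, hx, y, hy, hxy⟩ := hall
    obtain ⟨p, q, hpq, hp, hq, hxp, hxq, hTe⟩ := two_of_erase T x hx hT3
    obtain ⟨r, s, hrs, hr, hs, hyr, hys, hT'e⟩ := two_of_erase T' y hy hT'3
    by_cases hpr : G.Adj p r
    · by_cases hqr : G.Adj q r
      · by_cases hqs : G.Adj q s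
        · left
          refine ⟨p, q, x, r, s, y, ?_, ?_, ?_⟩
          · rw [hTe]; ext z; simp; tauto
          · rw [hT'e]; ext z; simp; tauto
          · refine sq6 G x p q r s y ?_ (hT x hx p hp hxp) (hT x hx q hq hxq)
              (hT p hp q hq hpq) hpr hqr hqs (hT' r hr s hs hrs)
              ((hT' y hy r hr hyr).symm) ((hT' y hy s hs hys).symm)
            simp only [List.nodup_cons, List.mem_cons, List.not_mem_nil, or_false,
              List.nodup_nil, and_true, List.mem_singleton]
            push_neg
            exact ⟨⟨hxp, hxq, hcross x hx r hr, hcross x hx s hs, hcross x hx y hy⟩,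
              ⟨hpq, hcross p hp r hr, hcross p hp s hs, hcross p hp y hy⟩,
              ⟨hcross q hq r hr, hcross q hq s hs, hcross q hq y hy⟩,
              ⟨hrs, hyr.symm⟩, hys.symm, trivial⟩
        · right
          exact ⟨x, q, y, s, hx, hq, hy, hs, hxq, hys, hxy, hqs⟩
      · right
        exact ⟨x, q, y, r, hx, hq, hy, hr, hxq, hyr, hxy, hqr⟩
    · right
      exact ⟨x, p, y, r, hx, hp, hy, hr, hxp, hyr, hxy, hpr⟩
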